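/- arXiv:2506.15233 — 10 statements merged into one kernel-verified Lean document; each statement's English description precedes it below -/
import Mathlib

section
/- Let T and s be positive integers with s ≤ T. Define a graph G on vertex set Z_{2T+1} where a and b are adjacent iff a - b ∈ {s, s+1, ..., 2T+1-s} (mod 2T+1). Then every independent set in G has size at most s. -/
private lemma tele_sum (f : ℕ → ℕ) (hf : ∀ i, f i < f (i+1)) (N : ℕ) :
    ∑ k ∈ Finset.range N, (f (k+1) - f k) = f N - f 0 := by
  induction N with
  | zero => simp
  | succ N ih =>
      have h0N : f 0 ≤ f N :=
        (monotone_nat_of_le_succ (fun i => (hf i).le)) (Nat.zero_le N)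
      rw [Finset.sum_range_succ, ih]
      have := hf N
      omega

private lemma key (n s : ℕ) (hs : 0 < s) (hn : 2*s + 1 ≤ n)
    (V : Finset ℕ) (hVn : ∀ v ∈ V, v < n)
    (hcond : ∀ u ∈ V, ∀ v ∈ V, v < u → (u - v < s ∨ n - s < u - v)) :
    V.card ≤ s := by
  by_contra hcard
  push_neg at hcard
  set m := V.card with hmdef
  have hmpos : 0 < m := by omega
  set e := V.orderIsoOfFin rfl with hedef
  set x : ℕ → ℕ := fun r => if h : r < m then (e ⟨r, h⟩ : ℕ) else 0 with hxdef
  have hx_mem : ∀ r, r < m → x r ∈ V := by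
    intro r hr
    simp only [hxdef, dif_pos hr]
    exact (e ⟨r, hr⟩).2
  have hx_lt : ∀ r, r < m → x r < n := fun r hr => hVn _ (hx_mem r hr)
  have hx_mono : ∀ r r', r < r' → r' < m → x r < x r' := by
    intro r r' hrr hr'
    have hr : r < m := lt_trans hrr hr'
    simp only [hxdef, dif_pos hr, dif_pos hr']
    have : e ⟨r, hr⟩ < e ⟨r', hr'⟩ := e.strictMono (Fin.mk_lt_mk.mpr hrr)
    exact_mod_cast this
  set f : ℕ → ℕ := fun i => x (i % m) + n * (i / m) with hfdef
  have hfval : ∀ a q r, r < m → a = m * q + r → f a = x r + n * q := by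
    intro a q r h1 h2
    have h3 : a / m = q ∧ a % m = r :=
      (Nat.div_mod_unique hmpos).mpr ⟨by omega, h1⟩
    simp only [hfdef]
    rw [h3.1, h3.2]
  have hdecomp : ∀ i : ℕ, ∃ q r, r < m ∧ i = m * q + r := by
    intro i
    exact ⟨i / m, i % m, Nat.mod_lt i hmpos, by have := Nat.div_add_mod i m; omega⟩
  have hstep : ∀ i, f i < f (i+1) := by
    intro i
    obtain ⟨q, r, hr, hi⟩ := hdecomp i
    by_cases hrm : r + 1 < m
    · rw [hfval i q r hr hi, hfval (i+1) q (r+1) hrm (by omega)]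
      have := hx_mono r (r+1) (by omega) hrm
      omega
    · rw [hfval i q r hr hi, hfval (i+1) (q+1) 0 hmpos (by
        have : m * (q+1) = m * q + m := by ring
        omega)]
      have h1 := hx_lt r hr
      have h2 : n * (q+1) = n * q + n := by ring
      omega
  have hmono : StrictMono f := strictMono_nat_of_lt_succ hstep
  have hper : ∀ i, f (i + m) = f i + n := by
    intro i
    obtain ⟨q, r, hr, hi⟩ := hdecomp i
    rw [hfval i q r hr hi, hfval (i+m) (q+1) r hr (by
      have : m * (q+1) = m * q + m := by ring
      omega)]
    have : n * (q+1) = n * q + n := by ring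
    omega
  have hspan : ∀ i j, i < j → j < i + m → f j < f i + n := by
    intro i j hij hj
    have := hmono hj
    rw [hper i] at this
    omega
  have hpair : ∀ i j, i < j → j < i + m → (f j < f i + s ∨ f i + (n - s) < f j) := by
    intro i j hij hj
    obtain ⟨q, r, hr, hi⟩ := hdecomp i
    obtain ⟨q', r', hr', hj'⟩ := hdecomp j
    have hqle : q ≤ q' := by
      by_contra hq
      push_neg at hq
      have : m * (q' + 1) ≤ m * q := Nat.mul_le_mul_left m (by omega)
      have h2 : m * (q'+1) = m * q' + m := by ring
      omega
    have hqge : q' ≤ q + 1 := by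
      by_contra hq
      push_neg at hq
      have : m * (q + 2) ≤ m * q' := Nat.mul_le_mul_left m (by omega)
      have h2 : m * (q+2) = m * q + 2*m := by ring
      omega
    rcases Nat.eq_or_lt_of_le hqle with hq | hq
    · -- same block : r < r'
      subst hq
      have hrr : r < r' := by omega
      have hlt := hx_mono r r' hrr hr'
      have hxr := hx_lt r hr
      have hxr' := hx_lt r' hr'
      have hc := hcond (x r') (hx_mem r' hr') (x r) (hx_mem r hr) hlt
      rw [hfval i q r hr hi, hfval j q r' hr' hj']
      omega
    · have hq1 : q' = q + 1 := by omega
      subst hq1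
      have hrr : r' < r := by
        have h2 : m * (q+1) = m * q + m := by ring
        omega
      have hlt := hx_mono r' r hrr hr
      have hxr := hx_lt r hr
      have hxr' := hx_lt r' hr'
      have hc := hcond (x r) (hx_mem r hr) (x r') (hx_mem r' hr') hlt
      rw [hfval i q r hr hi, hfval j (q+1) r' hr' hj']
      have h2 : n * (q+1) = n * q + n := by ring
      omega
  -- crossing point
  set t : ℕ → ℕ := fun i => Nat.findGreatest (fun u => f u < f i + s) (i + m - 1) with htdef
  have hng : ∀ i, Nat.findGreatest (fun u => f u < f i + s) (i + m - 1) = t i :=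
    fun _ => rfl
  have ht_ge : ∀ i, i ≤ t i := by
    intro i
    rw [← hng i]
    exact Nat.le_findGreatest (by omega) (by omega)
  have ht_le : ∀ i, t i ≤ i + m - 1 := by
    intro i
    rw [← hng i]
    exact Nat.findGreatest_le _
  have ht_P : ∀ i, f (t i) < f i + s := by
    intro i
    have := Nat.findGreatest_spec (P := fun u => f u < f i + s) (n := i + m - 1)
      (m := i) (by omega) (by omega)
    rwa [hng] at this
  have ht_next : ∀ i, f i + n < f (t i + 1) + s := by
    intro i
    by_cases h : t i + 1 ≤ i + m - 1
    · have hnp := Nat.findGreatest_is_greatest (P := fun u => f u < f i + s)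
        (n := i + m - 1) (k := t i + 1) (by rw [hng]; omega) h
      simp only [not_lt] at hnp
      have hp := hpair i (t i + 1) (by have := ht_ge i; omega) (by omega)
      omega
    · have h2 : t i + 1 = i + m := by have := ht_le i; omega
      rw [h2, hper]
      omega
  set c : ℕ → ℕ := fun i => t i % m with hcdef
  have hceq : ∀ i, c i = t i % m := fun _ => rfl
  have hc_lt : ∀ i, c i < m := fun i => Nat.mod_lt _ hmpos
  have ht_cases : ∀ i, i < m → t i = c i ∨ t i = c i + m := by
    intro i hi
    have h1 : t i < 2 * m := by have := ht_le i; omega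
    have h2 := Nat.div_add_mod (t i) m
    have h3 : t i / m ≤ 1 := by
      by_contra hcon
      push_neg at hcon
      have : m * 2 ≤ m * (t i / m) := Nat.mul_le_mul_left m (by omega)
      omega
    have h5 := hceq i
    rcases Nat.le_one_iff_eq_zero_or_eq_one.mp h3 with h4 | h4 <;> rw [h4] at h2
    · left; omega
    · right; omega
  -- gap periodicity
  have hgper : ∀ k, f (k + m + 1) - f (k + m) = f (k+1) - f k := by
    intro k
    have h1 : k + m + 1 = (k+1) + m := by ring
    rw [h1, hper, hper]
    omega
  -- fiber bound
  have hfiber : ∀ k ∈ (Finset.range m).image c,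
      ((Finset.range m).filter (fun i => c i = k)).card + (n+1) ≤ (f (k+1) - f k) + 2*s := by
    intro k hk
    obtain ⟨i0, hi0r, hi0⟩ := Finset.mem_image.mp hk
    have hi0m : i0 < m := Finset.mem_range.mp hi0r
    have hfib : ∀ i, i < m → c i = k →
        f i ≤ f (t i) ∧ f (t i) < f i + s ∧ f i + n < f (t i) + (f (k+1) - f k) + s ∧
        (f (t i) = f k ∨ f (t i) = f k + n) := by
      intro i him hci
      have hge := ht_ge i
      have hmle : f i ≤ f (t i) := hmono.le_iff_le.mpr hge
      have hP := ht_P i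
      have hnext := ht_next i
      have hcase := ht_cases i him
      rw [hci] at hcase
      have hgap : f (t i + 1) - f (t i) = f (k+1) - f k := by
        rcases hcase with h | h
        · rw [h]
        · rw [h, hgper]
      have hm2 : f (t i) ≤ f (t i + 1) := (hstep (t i)).le
      refine ⟨hmle, hP, by omega, ?_⟩
      rcases hcase with h | h
      · left; rw [h]
      · right; rw [h, hper]
    have hgklow : n + 1 ≤ (f (k+1) - f k) + 2*s := by
      obtain ⟨ha, hb, hc', _⟩ := hfib i0 hi0m hi0
      omega
    set d : ℕ → ℕ := fun i => f (t i) - f i with hddef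
    have hmaps : ∀ i ∈ (Finset.range m).filter (fun i => c i = k),
        d i ∈ Finset.Ico (n + 1 - s - (f (k+1) - f k)) s := by
      intro i hi
      rw [Finset.mem_filter, Finset.mem_range] at hi
      obtain ⟨ha, hb, hc', _⟩ := hfib i hi.1 hi.2
      simp only [hddef]
      rw [Finset.mem_Ico]
      constructor <;> omega
    have hinj : Set.InjOn d ((Finset.range m).filter (fun i => c i = k)) := by
      intro i hi i' hi' hdd
      rw [Finset.coe_filter] at hi hi'
      simp only [Set.mem_setOf_eq, Finset.mem_range] at hi hi'
      obtain ⟨ha, hb, _, hd⟩ := hfib i hi.1 hi.2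
      obtain ⟨ha', hb', _, hd'⟩ := hfib i' hi'.1 hi'.2
      simp only [hddef] at hdd
      by_contra hne
      rcases lt_trichotomy i i' with hlt | heq | hlt
      · have h1 : f i < f i' := hmono hlt
        have h2 : f i' < f i + n := hspan i i' hlt (by omega)
        omega
      · exact hne heq
      · have h1 : f i' < f i := hmono hlt
        have h2 : f i < f i' + n := hspan i' i hlt (by omega)
        omega
    have hcardle := Finset.card_le_card_of_injOn d hmaps hinj
    rw [Nat.card_Ico] at hcardle
    omega
  -- summation
  have hcount := Finset.card_eq_sum_card_image c (Finset.range m)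
  rw [Finset.card_range] at hcount
  set I := (Finset.range m).image c with hIdef
  have hIsub : I ⊆ Finset.range m := by
    intro k hk
    obtain ⟨i, _, rfl⟩ := Finset.mem_image.mp hk
    exact Finset.mem_range.mpr (hc_lt i)
  have hL_le : I.card ≤ m := by
    have := Finset.card_le_card hIsub
    rw [Finset.card_range] at this
    omega
  have hL_pos : 1 ≤ I.card := by
    have : I.Nonempty := (Finset.nonempty_range_iff.mpr (by omega)).image c
    exact Finset.card_pos.mpr this
  have hsum1 : m + I.card * (n+1) ≤ (∑ k ∈ I, (f (k+1) - f k)) + I.card * (2*s) := by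
    have h1 : ∑ k ∈ I, (((Finset.range m).filter (fun i => c i = k)).card + (n+1)) ≤
        ∑ k ∈ I, ((f (k+1) - f k) + 2*s) := Finset.sum_le_sum hfiber
    have eL : ∑ k ∈ I, (((Finset.range m).filter (fun i => c i = k)).card + (n+1)) =
        (∑ k ∈ I, ((Finset.range m).filter (fun i => c i = k)).card) + I.card * (n+1) := by
      rw [Finset.sum_add_distrib, Finset.sum_const, smul_eq_mul]
    have eR : ∑ k ∈ I, ((f (k+1) - f k) + 2*s) =
        (∑ k ∈ I, (f (k+1) - f k)) + I.card * (2*s) := by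
      rw [Finset.sum_add_distrib, Finset.sum_const, smul_eq_mul]
    have hc2 : m = ∑ k ∈ I, ((Finset.range m).filter (fun i => c i = k)).card := hcount
    omega
  have htotal : ∑ k ∈ Finset.range m, (f (k+1) - f k) = n := by
    rw [tele_sum f hstep m]
    have := hper 0
    simp only [Nat.zero_add] at this
    omega
  have hsum2 : (∑ k ∈ I, (f (k+1) - f k)) + (m - I.card) ≤ n := by
    have hsplit : ∑ k ∈ Finset.range m \ I, (f (k+1) - f k) +
        ∑ k ∈ I, (f (k+1) - f k) = ∑ k ∈ Finset.range m, (f (k+1) - f k) :=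
      Finset.sum_sdiff hIsub
    have hlower : (Finset.range m \ I).card • 1 ≤ ∑ k ∈ Finset.range m \ I, (f (k+1) - f k) :=
      Finset.card_nsmul_le_sum _ _ _ (fun k _ => by have := hstep k; omega)
    rw [Finset.card_sdiff_of_subset hIsub, Finset.card_range, smul_eq_mul, mul_one] at hlower
    omega
  -- final contradiction
  obtain ⟨L', hL'⟩ : ∃ L', I.card = L' + 1 := ⟨I.card - 1, by omega⟩
  rw [hL'] at hsum1 hsum2 hL_le
  have e1 : (L' + 1) * (n + 1) = L' * n + L' + n + 1 := by ring
  have e2 : (L' + 1) * (2 * s) = L' * (2*s) + 2 * s := by ring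
  rw [e1, e2] at hsum1
  have hLn : L' * (2*s) ≤ L' * n := Nat.mul_le_mul_left _ (by omega)
  omega

set_option maxHeartbeats 1000000 in
/-- Every independent set in the circulant graph on `ZMod (2T+1)` with connection set
`{s, ..., 2T+1-s}` has size at most `s`. -/
theorem stmt_0 (T s : ℕ) (hs : 0 < s) (hsT : s ≤ T)
    (J : Finset (ZMod (2 * T + 1)))
    (hind : ∀ a ∈ J, ∀ b ∈ J, a ≠ b →
      (a - b).val ∉ Finset.Icc s (2 * T + 1 - s)) :
    J.card ≤ s := by
  haveI : NeZero (2*T+1) := ⟨by omega⟩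
  have hval_inj : Function.Injective (ZMod.val : ZMod (2*T+1) → ℕ) := ZMod.val_injective _
  have hcardV : (J.image ZMod.val).card = J.card := Finset.card_image_of_injective J hval_inj
  rw [← hcardV]
  apply key (2*T+1) s hs (by omega)
  · intro v hv
    obtain ⟨a, _, rfl⟩ := Finset.mem_image.mp hv
    exact ZMod.val_lt a
  · intro u hu v hv hvu
    obtain ⟨a, haJ, rfl⟩ := Finset.mem_image.mp hu
    obtain ⟨b, hbJ, rfl⟩ := Finset.mem_image.mp hv
    have hab : a ≠ b := by
      intro h
      rw [h] at hvu
      omega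
    have h1 := hind a haJ b hbJ hab
    have ha : ((a.val : ℕ) : ZMod (2*T+1)) = a := ZMod.natCast_rightInverse a
    have hb : ((b.val : ℕ) : ZMod (2*T+1)) = b := ZMod.natCast_rightInverse b
    have hsub : a - b = ((a.val - b.val : ℕ) : ZMod (2*T+1)) := by
      rw [Nat.cast_sub hvu.le, ha, hb]
    have hvala : a.val < 2*T+1 := ZMod.val_lt a
    have hval : (a - b).val = a.val - b.val := by
      rw [hsub, ZMod.val_cast_of_lt (by omega)]
    rw [hval] at h1
    simp only [Finset.mem_Icc, not_and, not_le] at h1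
    omega
end

section
/- Let T and s be positive integers with s ≤ T, and let J be a subset of Z_{2T+1} with |J| ≥ s+1. Then there exist a, b ∈ J such that a - b ∈ {s, s+1, ..., 2T+1-s} (mod 2T+1). -/
/-- Any subset of `ZMod (2T+1)` of size at least `s+1` contains two elements whose
difference lies in `{s, ..., 2T+1-s}` modulo `2T+1`. -/
theorem stmt_1 (T s : ℕ) (hs : 0 < s) (hsT : s ≤ T)
    (J : Finset (ZMod (2 * T + 1))) (hJ : s + 1 ≤ J.card) :
    ∃ a ∈ J, ∃ b ∈ J, (a - b).val ∈ Finset.Icc s (2 * T + 1 - s) := by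
  by_contra hcon
  push_neg at hcon
  have hJne : J.Nonempty := Finset.card_pos.mp (by omega)
  obtain ⟨a0, ha0⟩ := hJne
  have key : ∀ x ∈ J, (x - a0).val < s ∨ 2 * T + 1 - s < (x - a0).val := by
    intro x hx
    have h1 := hcon x hx a0 ha0
    simp only [Finset.mem_Icc, not_and, not_le] at h1
    omega
  set e : ZMod (2 * T + 1) → ℤ := fun x =>
    if (x - a0).val < s then ((x - a0).val : ℤ)
    else ((x - a0).val : ℤ) - (2 * T + 1) with he
  have hvlt : ∀ x : ZMod (2 * T + 1), (x - a0).val < 2 * T + 1 := fun x => ZMod.val_lt _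
  have hbound : ∀ x ∈ J, -(s : ℤ) + 1 ≤ e x ∧ e x ≤ (s : ℤ) - 1 := by
    intro x hx
    have hk := key x hx
    have hv := hvlt x
    by_cases h : (x - a0).val < s
    · simp only [he, if_pos h]
      omega
    · simp only [he, if_neg h]
      omega
  have hcast : ∀ x : ZMod (2 * T + 1), ((e x : ℤ) : ZMod (2 * T + 1)) = x - a0 := by
    intro x
    by_cases h : (x - a0).val < s
    · simp only [he, if_pos h]
      push_cast
      rw [ZMod.natCast_val, ZMod.cast_id]
    · simp only [he, if_neg h]
      push_cast
      rw [ZMod.natCast_val, ZMod.cast_id]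
      have h0 : ((2 * T + 1 : ℕ) : ZMod (2 * T + 1)) = 0 := ZMod.natCast_self _
      push_cast at h0
      rw [h0, sub_zero]
  haveI : NeZero s := ⟨hs.ne'⟩
  have hinj : Set.InjOn (fun x => ((e x : ℤ) : ZMod s)) ↑J := by
    intro x hx y hy hxy
    simp only at hxy
    have hdvd : (s : ℤ) ∣ (e x - e y) := by
      have h0 : ((e x - e y : ℤ) : ZMod s) = 0 := by
        push_cast
        rw [hxy, sub_self]
      exact (ZMod.intCast_zmod_eq_zero_iff_dvd _ _).mp h0
    obtain ⟨q, hq⟩ := hdvd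
    have hbx := hbound x hx
    have hby := hbound y hy
    have hs1 : (1 : ℤ) ≤ (s : ℤ) := by exact_mod_cast hs
    have hqle : q ≤ 1 := by
      by_contra hq'
      push_neg at hq'
      have h2 : (s : ℤ) * 2 ≤ (s : ℤ) * q := by
        apply mul_le_mul_of_nonneg_left (by omega) (by linarith)
      linarith
    have hqge : -1 ≤ q := by
      by_contra hq'
      push_neg at hq'
      have h2 : (s : ℤ) * q ≤ (s : ℤ) * (-2) := by
        apply mul_le_mul_of_nonneg_left (by omega) (by linarith)
      linarith
    have hslt : s < 2 * T + 1 := by omega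
    have hsval : (((s : ℕ) : ZMod (2 * T + 1))).val = s := ZMod.val_cast_of_lt hslt
    have hsmem : s ∈ Finset.Icc s (2 * T + 1 - s) := by
      simp only [Finset.mem_Icc]
      omega
    interval_cases q
    · -- e x - e y = -s, so y - x = s
      exfalso
      have hyx : y - x = ((s : ℕ) : ZMod (2 * T + 1)) := by
        have : y - x = ((e y - e x : ℤ) : ZMod (2 * T + 1)) := by
          push_cast
          rw [hcast x, hcast y]
          ring
        rw [this]
        have : e y - e x = (s : ℤ) := by linarith
        rw [this]
        push_cast
        ring
      exact hcon y hy x hx (by rw [hyx, hsval]; exact hsmem)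
    · -- e x = e y
      have hxa : x - a0 = y - a0 := by
        rw [← hcast x, ← hcast y]
        have : e x = e y := by linarith
        rw [this]
      have := sub_left_injective.eq_iff.mp hxa
      exact sub_left_injective hxa
    · -- e x - e y = s, so x - y = s
      exfalso
      have hxy2 : x - y = ((s : ℕ) : ZMod (2 * T + 1)) := by
        have : x - y = ((e x - e y : ℤ) : ZMod (2 * T + 1)) := by
          push_cast
          rw [hcast x, hcast y]
          ring
        rw [this]
        have : e x - e y = (s : ℤ) := by linarith
        rw [this]
        push_cast
        ring
      exact hcon x hx y hy (by rw [hxy2, hsval]; exact hsmem)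
  have hcard := Finset.card_le_card_of_injOn (fun x => ((e x : ℤ) : ZMod s))
    (fun a _ => Finset.mem_univ _) hinj
  have : (Finset.univ : Finset (ZMod s)).card = s := by
    simp [ZMod.card]
  omega
end

section
/- Let C be a linear [n,k] code over F_q that is (τ,L)-list decodable, where L, τ are positive integers and q > binom(L+1, 2). Then for every positive integer ℓ, the ℓ-level interleaved code C^{⊗ℓ}, viewed as a length-n code over F_q^ℓ where a codeword is an ℓ×n matrix each of whose rows lies in C and distance is Hamming distance on columns, is also (τ,L)-list decodable. -/
open Finset

section Aux

variable {F : Type*} [Field F] [Fintype F] [DecidableEq F] {ℓ : ℕ}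

/-- The number of `v` in a hyperplane `{v | ∑ i, v i * d i = 0}` (with `d ≠ 0`) is `q^(ℓ-1)`. -/
lemma hyperplane_card (d : Fin ℓ → F) (hd0 : d ≠ 0) :
    (Finset.univ.filter fun v : Fin ℓ → F => ∑ i, v i * d i = 0).card
      = Fintype.card F ^ (ℓ - 1) := by
  classical
  let f : (Fin ℓ → F) →ₗ[F] F :=
    { toFun := fun v => ∑ i, v i * d i
      map_add' := by intro a b; simp [add_mul, Finset.sum_add_distrib]
      map_smul' := by intro c a; simp [Finset.mul_sum, mul_assoc] }
  obtain ⟨i0, hi0⟩ : ∃ i0, d i0 ≠ 0 := by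
    by_contra h; push_neg at h; exact hd0 (funext h)
  have hsurj : Function.Surjective f := by
    intro c
    refine ⟨fun i => if i = i0 then c * (d i0)⁻¹ else 0, ?_⟩
    simp [f, Finset.sum_ite_eq', mul_assoc, inv_mul_cancel₀ hi0]
  have h1 : Module.finrank F (LinearMap.range f) = 1 := by
    rw [LinearMap.range_eq_top.mpr hsurj]
    simp
  have h2 := LinearMap.finrank_range_add_finrank_ker f
  rw [h1, Module.finrank_pi, Fintype.card_fin] at h2
  have hl : 0 < ℓ := by
    rcases Nat.eq_zero_or_pos ℓ with h | h
    · exfalso; subst h; exact hd0 (funext fun i => i.elim0)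
    · exact h
  have hkr : Module.finrank F (LinearMap.ker f) = ℓ - 1 := by omega
  have hcard : Fintype.card (LinearMap.ker f) = Fintype.card F ^ (ℓ - 1) := by
    rw [Module.card_eq_pow_finrank (K := F), hkr]
  rw [← hcard, ← Fintype.card_coe]
  apply Fintype.card_congr
  apply Equiv.subtypeEquiv (Equiv.refl _)
  intro v
  simp [f, LinearMap.mem_ker]

end Aux

/-- If a linear `[n,k]` code over `F_q` is `(τ,L)`-list decodable and `q > C(L+1,2)`,
then its `ℓ`-level interleaving (viewed as a length-`n` code over `F_q^ℓ`, a codeword being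
an `ℓ×n` array each of whose rows lies in `C`, with Hamming distance on columns)
is `(τ,L)`-list decodable. -/
theorem stmt_2 (F : Type*) [Field F] [Fintype F] [DecidableEq F] (n k L τ ℓ : ℕ)
    (hL : 0 < L) (hτ : 0 < τ) (hℓ : 0 < ℓ)
    (hq : (L + 1).choose 2 < Fintype.card F)
    (C : Submodule F (Fin n → F)) (hk : Module.finrank F C = k)
    (hC : ∀ y : Fin n → F, ∀ S : Finset (Fin n → F),
      (∀ c ∈ S, c ∈ C) → (∀ c ∈ S, hammingDist y c ≤ τ) → S.card ≤ L) :
    ∀ Y : Fin n → (Fin ℓ → F), ∀ S : Finset (Fin n → (Fin ℓ → F)),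
      (∀ Γ ∈ S, ∀ i : Fin ℓ, (fun j => Γ j i) ∈ C) →
      (∀ Γ ∈ S, hammingDist Y Γ ≤ τ) → S.card ≤ L := by
  classical
  intro Y S hrows hdist
  by_contra hgt
  push_neg at hgt
  obtain ⟨T, hTS, hTcard⟩ := Finset.exists_subset_card_eq (show L + 1 ≤ S.card by omega)
  set φ : (Fin ℓ → F) → (Fin n → Fin ℓ → F) → (Fin n → F) :=
    fun v Γ j => ∑ i, v i * Γ j i with hφ
  -- pairwise bad sets
  have key : ∀ Γ Γ' : Fin n → Fin ℓ → F, Γ ≠ Γ' →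
      (Finset.univ.filter fun v : Fin ℓ → F => φ v Γ = φ v Γ').card
        ≤ Fintype.card F ^ (ℓ - 1) := by
    intro Γ Γ' hne
    obtain ⟨j, hj⟩ : ∃ j, Γ j ≠ Γ' j := by
      by_contra h; push_neg at h; exact hne (funext h)
    set d : Fin ℓ → F := fun i => Γ j i - Γ' j i with hd
    have hd0 : d ≠ 0 := by
      intro h; apply hj; funext i
      have := congrFun h i
      simpa [hd, sub_eq_zero] using this
    rw [← hyperplane_card d hd0]
    apply Finset.card_le_card
    intro v hv
    simp only [Finset.mem_filter, Finset.mem_univ, true_and] at hv ⊢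
    have := congrFun hv j
    simp only [hφ] at this
    simp [hd, mul_sub, Finset.sum_sub_distrib, this]
  -- union bound
  set B : Finset (Fin ℓ → F) := (T.powersetCard 2).biUnion
    (fun p => Finset.univ.filter fun v =>
      ∃ Γ ∈ p, ∃ Γ' ∈ p, Γ ≠ Γ' ∧ φ v Γ = φ v Γ') with hB
  have hBcard : B.card ≤ (L + 1).choose 2 * Fintype.card F ^ (ℓ - 1) := by
    refine (Finset.card_biUnion_le).trans ?_
    calc ∑ p ∈ T.powersetCard 2, (Finset.univ.filter fun v =>
          ∃ Γ ∈ p, ∃ Γ' ∈ p, Γ ≠ Γ' ∧ φ v Γ = φ v Γ').card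
        ≤ ∑ _p ∈ T.powersetCard 2, Fintype.card F ^ (ℓ - 1) := by
          apply Finset.sum_le_sum
          intro p hp
          rw [Finset.mem_powersetCard] at hp
          obtain ⟨a, b, hab, rfl⟩ := Finset.card_eq_two.mp hp.2
          refine (Finset.card_le_card ?_).trans (key a b hab)
          intro v hv
          simp only [Finset.mem_filter, Finset.mem_univ, true_and,
            Finset.mem_insert, Finset.mem_singleton] at hv ⊢
          obtain ⟨Γ, hΓ, Γ', hΓ', hne, heq⟩ := hv
          rcases hΓ with rfl | rfl <;> rcases hΓ' with rfl | rfl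
          · exact absurd rfl hne
          · exact heq
          · exact heq.symm
          · exact absurd rfl hne
      _ = (L + 1).choose 2 * Fintype.card F ^ (ℓ - 1) := by
          rw [Finset.sum_const, Finset.card_powersetCard, hTcard, smul_eq_mul]
  have hBlt : B.card < Fintype.card (Fin ℓ → F) := by
    have hq1 : 0 < Fintype.card F := Fintype.card_pos
    calc B.card ≤ (L + 1).choose 2 * Fintype.card F ^ (ℓ - 1) := hBcard
      _ < Fintype.card F * Fintype.card F ^ (ℓ - 1) := by
          exact (Nat.mul_lt_mul_right (pow_pos hq1 _)).mpr hq
      _ = Fintype.card F ^ ℓ := by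
          rw [← pow_succ']
          congr 1
          omega
      _ = Fintype.card (Fin ℓ → F) := by simp
  -- a good vector v exists
  obtain ⟨v, hv⟩ : ∃ v : Fin ℓ → F, v ∉ B := by
    by_contra h
    push_neg at h
    have : B = Finset.univ := Finset.eq_univ_iff_forall.mpr h
    rw [this, Finset.card_univ] at hBlt
    omega
  have hinj : ∀ Γ ∈ T, ∀ Γ' ∈ T, Γ ≠ Γ' → φ v Γ ≠ φ v Γ' := by
    intro Γ hΓ Γ' hΓ' hne heq
    apply hv
    rw [hB, Finset.mem_biUnion]
    refine ⟨{Γ, Γ'}, ?_, ?_⟩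
    · rw [Finset.mem_powersetCard]
      constructor
      · intro x hx
        rcases Finset.mem_insert.mp hx with rfl | hx
        · exact hΓ
        · rw [Finset.mem_singleton] at hx; subst hx; exact hΓ'
      · exact Finset.card_pair hne
    · simp only [Finset.mem_filter, Finset.mem_univ, true_and]
      exact ⟨Γ, by simp, Γ', by simp, hne, heq⟩
  -- the projected list
  set S' : Finset (Fin n → F) := T.image (φ v) with hS'
  have hS'card : S'.card = L + 1 := by
    rw [hS', Finset.card_image_of_injOn, hTcard]
    intro a ha b hb hab
    by_contra hne
    exact hinj a ha b hb hne hab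
  have hle := hC (φ v Y) S' ?_ ?_
  · omega
  · intro c hc
    rw [hS', Finset.mem_image] at hc
    obtain ⟨Γ, hΓ, rfl⟩ := hc
    have : φ v Γ = ∑ i, v i • (fun j => Γ j i) := by
      funext j
      simp [hφ, Finset.sum_apply]
    rw [this]
    exact Submodule.sum_mem C fun i _ => C.smul_mem _ (hrows Γ (hTS hΓ) i)
  · intro c hc
    rw [hS', Finset.mem_image] at hc
    obtain ⟨Γ, hΓ, rfl⟩ := hc
    refine le_trans ?_ (hdist Γ (hTS hΓ))
    simp only [hammingDist]
    apply Finset.card_le_card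
    intro j hj
    simp only [Finset.mem_filter, Finset.mem_univ, true_and] at hj ⊢
    intro h
    apply hj
    simp [hφ, h]
end

section
/- Let n, d, ℓ be positive integers with d ≤ n, and let τ be a positive rational with denominator dividing 3 satisfying τ ≤ (2d-1)/3. For i ∈ [ℓ], let Σ_i be a finite abelian group and C_i ⊆ Σ_i^n a code of minimum Hamming distance at least d that is strongly-(τ,2)-list decodable. Then the interleaved code ⊗_{i∈[ℓ]} C_i (the set of ℓ×n arrays whose i-th row lies in C_i, with Hamming distance on columns) is strongly-(τ,2)-list decodable. -/
open Finset

private lemma rowle {ℓ n : ℕ} {A : Fin ℓ → Type*} [∀ i, DecidableEq (A i)]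
    (Y Γ : Fin n → (∀ i, A i)) (i : Fin ℓ) :
    hammingDist (fun j => Y j i) (fun j => Γ j i) ≤ hammingDist Y Γ := by
  apply Finset.card_le_card
  intro j hj
  simp only [Finset.mem_filter, Finset.mem_univ, true_and] at hj ⊢
  exact fun h => hj (congrFun h i)

private lemma key_s4 {ℓ n d : ℕ} {A : Fin ℓ → Type*} [∀ i, DecidableEq (A i)]
    (Y Γa Γb Γc : Fin n → (∀ i, A i)) (i i' : Fin ℓ)
    (hbc : ∀ j, Γb j i = Γc j i) (hac : ∀ j, Γa j i' = Γc j i')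
    (hX : d ≤ hammingDist (fun j => Γa j i) (fun j => Γb j i))
    (hZ : d ≤ hammingDist (fun j => Γa j i') (fun j => Γb j i')) :
    2 * d ≤ hammingDist Y Γa + hammingDist Y Γb + hammingDist Y Γc := by
  have hsum : ∀ (U V : Fin n → (∀ k, A k)),
      hammingDist U V = ∑ j, if U j ≠ V j then 1 else 0 := by
    intro U V
    rw [hammingDist, Finset.card_filter]
  have key2 : ∀ j : Fin n,
      ((if Γa j i ≠ Γb j i then 1 else 0) + (if Γa j i' ≠ Γb j i' then 1 else 0) : ℕ)
        ≤ (if Y j ≠ Γa j then 1 else 0) + (if Y j ≠ Γb j then 1 else 0)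
          + (if Y j ≠ Γc j then 1 else 0) := by
    intro j
    by_cases h1 : Γa j i = Γb j i <;> by_cases h2 : Γa j i' = Γb j i'
    · rw [if_neg (not_not.mpr h1), if_neg (not_not.mpr h2)]
      omega
    · -- only Z: Γb j ≠ Γc j
      have hbcne : Γb j ≠ Γc j := fun h => h2 ((hac j).trans (congrFun h i').symm)
      rw [if_neg (not_not.mpr h1), if_pos h2]
      by_cases hb : Y j = Γb j
      · have hc : Y j ≠ Γc j := fun h => hbcne (hb ▸ h)
        rw [if_pos hc]; omega
      · rw [if_pos hb]; omega
    · -- only X: Γa j ≠ Γb j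
      rw [if_pos h1, if_neg (not_not.mpr h2)]
      by_cases ha : Y j = Γa j
      · have hb : Y j ≠ Γb j := fun h => h1 (congrFun (ha ▸ h : Γa j = Γb j) i)
        rw [if_pos hb]; omega
      · rw [if_pos ha]; omega
    · -- both: Γa, Γb, Γc pairwise distinct
      have hab : Γa j ≠ Γb j := fun h => h1 (congrFun h i)
      have hacne : Γa j ≠ Γc j := fun h => h1 ((congrFun h i).trans (hbc j).symm)
      have hbcne : Γb j ≠ Γc j := fun h => h2 ((hac j).trans (congrFun h i').symm)
      rw [if_pos h1, if_pos h2]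
      by_cases ha : Y j = Γa j
      · have hb : Y j ≠ Γb j := fun h => hab (ha ▸ h)
        have hc : Y j ≠ Γc j := fun h => hacne (ha ▸ h)
        rw [if_pos hb, if_pos hc]; omega
      · by_cases hb : Y j = Γb j
        · have hc : Y j ≠ Γc j := fun h => hbcne (hb ▸ h)
          rw [if_pos ha, if_pos hc]; omega
        · rw [if_pos ha, if_pos hb]; omega
  have hXeq : hammingDist (fun j => Γa j i) (fun j => Γb j i)
      = ∑ j, if Γa j i ≠ Γb j i then 1 else 0 := by
    rw [hammingDist, Finset.card_filter]
  have hZeq : hammingDist (fun j => Γa j i') (fun j => Γb j i')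
      = ∑ j, if Γa j i' ≠ Γb j i' then 1 else 0 := by
    rw [hammingDist, Finset.card_filter]
  calc 2 * d ≤ hammingDist (fun j => Γa j i) (fun j => Γb j i)
        + hammingDist (fun j => Γa j i') (fun j => Γb j i') := by omega
    _ = ∑ j, ((if Γa j i ≠ Γb j i then 1 else 0) + (if Γa j i' ≠ Γb j i' then 1 else 0)) := by
        rw [hXeq, hZeq, Finset.sum_add_distrib]
    _ ≤ ∑ j, ((if Y j ≠ Γa j then 1 else 0) + (if Y j ≠ Γb j then 1 else 0)
          + (if Y j ≠ Γc j then 1 else 0)) := Finset.sum_le_sum fun j _ => key2 j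
    _ = hammingDist Y Γa + hammingDist Y Γb + hammingDist Y Γc := by
        rw [hsum Y Γa, hsum Y Γb, hsum Y Γc, ← Finset.sum_add_distrib,
          ← Finset.sum_add_distrib]

/-- Preservation of strong `(τ,2)`-list decodability under interleaving: if each `C i`
is a code of minimum distance at least `d` over an abelian group that is
strongly-`(τ,2)`-list decodable, with `0 < τ ≤ (2d-1)/3` and `3τ` an integer,
then the interleaved code (arrays whose `i`-th row lies in `C i`, with Hamming distance
on columns) is strongly-`(τ,2)`-list decodable. -/
theorem stmt_4 (ℓ n d : ℕ) (hℓ : 0 < ℓ) (hn : 0 < n) (hd : 0 < d) (hdn : d ≤ n)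
    (τ : ℚ) (hτpos : 0 < τ) (hτden : (3 * τ).den = 1)
    (hτub : τ ≤ (2 * (d : ℚ) - 1) / 3)
    (A : Fin ℓ → Type*) [∀ i, AddCommGroup (A i)] [∀ i, DecidableEq (A i)]
    (C : ∀ i, Set (Fin n → A i))
    (hmin : ∀ i, ∀ c ∈ C i, ∀ c' ∈ C i, c ≠ c' → d ≤ hammingDist c c')
    (hstrong : ∀ i, ∀ y : Fin n → A i, ∀ c₁ ∈ C i, ∀ c₂ ∈ C i, ∀ c₃ ∈ C i,
      c₁ ≠ c₂ → c₁ ≠ c₃ → c₂ ≠ c₃ →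
      3 * τ < ((hammingDist y c₁ + hammingDist y c₂ + hammingDist y c₃ : ℕ) : ℚ)) :
    ∀ Y : Fin n → (∀ i, A i), ∀ Γ₁ Γ₂ Γ₃ : Fin n → (∀ i, A i),
      (∀ i, (fun j => Γ₁ j i) ∈ C i) → (∀ i, (fun j => Γ₂ j i) ∈ C i) →
      (∀ i, (fun j => Γ₃ j i) ∈ C i) →
      Γ₁ ≠ Γ₂ → Γ₁ ≠ Γ₃ → Γ₂ ≠ Γ₃ →
      3 * τ < ((hammingDist Y Γ₁ + hammingDist Y Γ₂ + hammingDist Y Γ₃ : ℕ) : ℚ) := by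
  intro Y Γ₁ Γ₂ Γ₃ hm1 hm2 hm3 h12 h13 h23
  -- row functions
  set r : (Fin n → (∀ i, A i)) → ∀ i : Fin ℓ, Fin n → A i := fun Γ i j => Γ j i with hr
  by_cases hcase : ∃ i : Fin ℓ, (fun j => Γ₁ j i) ≠ (fun j => Γ₂ j i)
      ∧ (fun j => Γ₁ j i) ≠ (fun j => Γ₃ j i) ∧ (fun j => Γ₂ j i) ≠ (fun j => Γ₃ j i)
  · obtain ⟨i, hi12, hi13, hi23⟩ := hcase
    have h := hstrong i (fun j => Y j i) _ (hm1 i) _ (hm2 i) _ (hm3 i) hi12 hi13 hi23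
    refine lt_of_lt_of_le h ?_
    have l1 := rowle Y Γ₁ i
    have l2 := rowle Y Γ₂ i
    have l3 := rowle Y Γ₃ i
    exact_mod_cast Nat.add_le_add (Nat.add_le_add l1 l2) l3
  · push_neg at hcase
    -- every row has a coinciding pair
    have h2 : ∀ i : Fin ℓ, (fun j => Γ₁ j i) = (fun j => Γ₂ j i)
        ∨ (fun j => Γ₁ j i) = (fun j => Γ₃ j i) ∨ (fun j => Γ₂ j i) = (fun j => Γ₃ j i) := by
      intro i
      by_contra hcon
      push_neg at hcon
      exact hcon.2.2 (hcase i hcon.1 hcon.2.1)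
    -- get rows where each pair differs
    have getrow : ∀ {U V : Fin n → (∀ i, A i)}, U ≠ V →
        ∃ i : Fin ℓ, (fun j => U j i) ≠ (fun j => V j i) := by
      intro U V hUV
      by_contra hcon
      push_neg at hcon
      apply hUV
      funext j i
      exact congrFun (hcon i) j
    obtain ⟨i₁, hi₁⟩ := getrow h12  -- rows 1,2 differ at i₁
    obtain ⟨i₂, hi₂⟩ := getrow h13  -- rows 1,3 differ at i₂
    obtain ⟨i₃, hi₃⟩ := getrow h23  -- rows 2,3 differ at i₃
    have hmd : ∀ (i : Fin ℓ) (U V : Fin n → (∀ k, A k)),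
        (fun j => U j i) ∈ C i → (fun j => V j i) ∈ C i →
        (fun j => U j i) ≠ (fun j => V j i) →
        d ≤ hammingDist (fun j => U j i) (fun j => V j i) := fun i U V hu hv hne =>
      hmin i _ hu _ hv hne
    -- main bound: 2d ≤ sum
    have main : 2 * d ≤ hammingDist Y Γ₁ + hammingDist Y Γ₂ + hammingDist Y Γ₃ := by
      -- helper to apply key with appropriate permutations
      -- odd index at a row i: the codeword whose row differs from the other two (equal) rows
      -- key Y Γa Γb Γc i i' : at i, rows of Γb,Γc equal (odd a); at i', rows of Γa,Γc equal (odd b)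
      rcases h2 i₁ with hA | hA | hA
      · exact absurd hA hi₁
      · -- r1 = r3 at i₁ : odd 2. Need a row with odd ≠ 2.
        have hi₁23 : (fun j => Γ₂ j i₁) ≠ (fun j => Γ₃ j i₁) := fun h => hi₁ (hA.trans h.symm)
        rcases h2 i₃ with hB | hB | hB
        · -- r1 = r2 at i₃ : odd 3. Pair (odd2 at i₁, odd3 at i₃): a=2,b=3,c=1
          -- key with Γa=Γ₂, Γb=Γ₃, Γc=Γ₁, i=i₁ (Γ₃=Γ₁ rows at i₁), i'=i₃ (Γ₂=Γ₁ rows at i₃)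
          have hi₃13 : (fun j => Γ₁ j i₃) ≠ (fun j => Γ₃ j i₃) := fun h => hi₃ (hB.symm.trans h)
          have hk := key_s4 (d := d) Y Γ₂ Γ₃ Γ₁ i₁ i₃
            (fun j => (congrFun hA.symm j : _)) (fun j => (congrFun hB.symm j : _))
            (hmd i₁ Γ₂ Γ₃ (hm2 i₁) (hm3 i₁) hi₁23)
            (hmd i₃ Γ₂ Γ₃ (hm2 i₃) (hm3 i₃) hi₃)
          omega
        · -- r1 = r3 at i₃ too : odd 2 again; use i₂
          have hi₃12 : (fun j => Γ₁ j i₃) ≠ (fun j => Γ₂ j i₃) := fun h => hi₃ (h.symm.trans hB)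
          rcases h2 i₂ with hC | hC | hC
          · -- r1 = r2 at i₂ : odd 3. Pair (odd2 at i₁, odd3 at i₂): same as above with i'=i₂
            have hi₂23 : (fun j => Γ₂ j i₂) ≠ (fun j => Γ₃ j i₂) := fun h => hi₂ (hC.trans h)
            have hk := key_s4 (d := d) Y Γ₂ Γ₃ Γ₁ i₁ i₂
              (fun j => (congrFun hA.symm j : _)) (fun j => (congrFun hC.symm j : _))
              (hmd i₁ Γ₂ Γ₃ (hm2 i₁) (hm3 i₁) hi₁23)
              (hmd i₂ Γ₂ Γ₃ (hm2 i₂) (hm3 i₂) hi₂23)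
            omega
          · exact absurd hC hi₂
          · -- r2 = r3 at i₂ : odd 1. Pair (odd1 at i₂, odd2 at i₃): a=1,b=2,c=3
            -- key Γa=Γ₁, Γb=Γ₂, Γc=Γ₃, i=i₂ (Γ₂=Γ₃ rows), i'=i₃ (Γ₁=Γ₃ rows)
            have hi₂12 : (fun j => Γ₁ j i₂) ≠ (fun j => Γ₂ j i₂) := fun h => hi₂ (h.trans hC)
            have hk := key_s4 (d := d) Y Γ₁ Γ₂ Γ₃ i₂ i₃
              (fun j => (congrFun hC j : _)) (fun j => (congrFun hB j : _))
              (hmd i₂ Γ₁ Γ₂ (hm1 i₂) (hm2 i₂) hi₂12)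
              (hmd i₃ Γ₁ Γ₂ (hm1 i₃) (hm2 i₃) hi₃12)
            omega
        · exact absurd hB hi₃
      · -- r2 = r3 at i₁ : odd 1. Need a row with odd ≠ 1; use i₂ (rows 1,3 differ)
        have hi₁13 : (fun j => Γ₁ j i₁) ≠ (fun j => Γ₃ j i₁) := fun h => hi₁ (h.trans hA.symm)
        rcases h2 i₂ with hB | hB | hB
        · -- r1 = r2 at i₂ : odd 3. Pair (odd1 at i₁, odd3 at i₂): a=1,b=3,c=2
          -- key Γa=Γ₁, Γb=Γ₃, Γc=Γ₂, i=i₁ (Γ₃=Γ₂ rows), i'=i₂ (Γ₁=Γ₂ rows)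
          have hk := key_s4 (d := d) Y Γ₁ Γ₃ Γ₂ i₁ i₂
            (fun j => (congrFun hA.symm j : _)) (fun j => (congrFun hB j : _))
            (hmd i₁ Γ₁ Γ₃ (hm1 i₁) (hm3 i₁) hi₁13)
            (hmd i₂ Γ₁ Γ₃ (hm1 i₂) (hm3 i₂) hi₂)
          omega
        · exact absurd hB hi₂
        · -- r2 = r3 at i₂ : odd 1 again; use i₃ (rows 2,3 differ)
          rcases h2 i₃ with hC | hC | hC
          · -- r1 = r2 at i₃ : odd 3. Pair (odd1 at i₁, odd3 at i₃)
            have hi₃13 : (fun j => Γ₁ j i₃) ≠ (fun j => Γ₃ j i₃) := fun h => hi₃ (hC.symm.trans h)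
            have hk := key_s4 (d := d) Y Γ₁ Γ₃ Γ₂ i₁ i₃
              (fun j => (congrFun hA.symm j : _)) (fun j => (congrFun hC j : _))
              (hmd i₁ Γ₁ Γ₃ (hm1 i₁) (hm3 i₁) hi₁13)
              (hmd i₃ Γ₁ Γ₃ (hm1 i₃) (hm3 i₃) hi₃13)
            omega
          · -- r1 = r3 at i₃ : odd 2. Pair (odd1 at i₁, odd2 at i₃): a=2,b=1,c=3?
            -- key Γa=Γ₂, Γb=Γ₁, Γc=Γ₃, i=i₃ (Γb=Γc : Γ₁=Γ₃ rows), i'=i₁ (Γa=Γc : Γ₂=Γ₃ rows)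
            have hi₃12 : (fun j => Γ₁ j i₃) ≠ (fun j => Γ₂ j i₃) := fun h => hi₃ (h.symm.trans hC)
            have hi₁12 : (fun j => Γ₁ j i₁) ≠ (fun j => Γ₂ j i₁) := fun h => hi₁ h
            have hk := key_s4 (d := d) Y Γ₂ Γ₁ Γ₃ i₃ i₁
              (fun j => (congrFun hC j : _)) (fun j => (congrFun hA j : _))
              (hmd i₃ Γ₂ Γ₁ (hm2 i₃) (hm1 i₃) (fun h => hi₃12 h.symm))
              (hmd i₁ Γ₂ Γ₁ (hm2 i₁) (hm1 i₁) (fun h => hi₁12 h.symm))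
            omega
          · exact absurd hC hi₃
    -- finish: 3τ ≤ 2d - 1 < 2d ≤ sum
    have h3τ : 3 * τ ≤ 2 * (d : ℚ) - 1 := by linarith [hτub]
    have hcast : (2 * d : ℚ) ≤ ((hammingDist Y Γ₁ + hammingDist Y Γ₂ + hammingDist Y Γ₃ : ℕ) : ℚ) := by
      exact_mod_cast main
    linarith
end

section
/- Let C_1, C_2 be codes of length n over abelian groups Σ_1, Σ_2 respectively, each with minimum distance at least d and each strongly-(τ,2)-list decodable, where 3τ ≤ 2d - 1. Then for every pair (y_1, y_2) ∈ Σ_1^n × Σ_2^n there do not exist three distinct pairs (c_1^{(r)}, c_2^{(r)}) ∈ C_1 × C_2, r = 1,2,3, such that the sum over r of |Supp(y_1 - c_1^{(r)}) ∪ Supp(y_2 - c_2^{(r)})| is at most 3τ. -/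
lemma col {G₁ G₂ : Type*} [AddCommGroup G₁] [AddCommGroup G₂] [DecidableEq G₁] [DecidableEq G₂]
    (p x z : G₁) (q u v : G₂) :
    ((if x ≠ z then 1 else 0) + (if u ≠ v then 1 else 0) : ℕ) ≤
      (if p - x ≠ 0 ∨ q - u ≠ 0 then 1 else 0) +
      (if p - x ≠ 0 ∨ q - v ≠ 0 then 1 else 0) +
      (if p - z ≠ 0 ∨ q - u ≠ 0 then 1 else 0) := by
  simp only [sub_ne_zero]
  by_cases h1 : p = x <;> by_cases h2 : p = z <;> by_cases h3 : q = u <;> by_cases h4 : q = v <;>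
    simp_all <;> split_ifs <;> omega

lemma mixed {n d : ℕ} {τ : ℚ} {G₁ G₂ : Type*} [AddCommGroup G₁] [AddCommGroup G₂]
    [DecidableEq G₁] [DecidableEq G₂]
    {y₁ : Fin n → G₁} {y₂ : Fin n → G₂} {c : Fin 3 → (Fin n → G₁) × (Fin n → G₂)}
    (hτ : 3 * τ ≤ 2 * (d : ℚ) - 1)
    (hsum : ((∑ r : Fin 3,
        ((Finset.univ.filter (fun j : Fin n => y₁ j - (c r).1 j ≠ 0)) ∪
         (Finset.univ.filter (fun j : Fin n => y₂ j - (c r).2 j ≠ 0))).card : ℕ) : ℚ) ≤ 3 * τ)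
    (a b m : Fin 3) (hab : a ≠ b) (ham : a ≠ m) (hbm : b ≠ m)
    (h1 : (c a).1 = (c b).1) (h2 : (c a).2 = (c m).2)
    (hdist1 : d ≤ hammingDist (c a).1 (c m).1)
    (hdist2 : d ≤ hammingDist (c a).2 (c b).2) : False := by
  set f : Fin 3 → ℕ := fun r =>
    ((Finset.univ.filter (fun j : Fin n => y₁ j - (c r).1 j ≠ 0)) ∪
     (Finset.univ.filter (fun j : Fin n => y₂ j - (c r).2 j ≠ 0))).card with hf
  have key : 2 * d ≤ f a + f b + f m := by
    have hfr : ∀ r, f r = ∑ j : Fin n,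
        (if y₁ j - (c r).1 j ≠ 0 ∨ y₂ j - (c r).2 j ≠ 0 then 1 else 0) := by
      intro r
      have hfr0 : f r = ((Finset.univ.filter (fun j : Fin n => y₁ j - (c r).1 j ≠ 0)) ∪
          (Finset.univ.filter (fun j : Fin n => y₂ j - (c r).2 j ≠ 0))).card := rfl
      rw [hfr0, ← Finset.filter_or, Finset.card_filter]
    have hh1 : hammingDist (c a).1 (c m).1 =
        ∑ j : Fin n, (if (c a).1 j ≠ (c m).1 j then 1 else 0) := by
      rw [hammingDist, Finset.card_filter]
    have hh2 : hammingDist (c a).2 (c b).2 =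
        ∑ j : Fin n, (if (c a).2 j ≠ (c b).2 j then 1 else 0) := by
      rw [hammingDist, Finset.card_filter]
    calc 2 * d ≤ hammingDist (c a).1 (c m).1 + hammingDist (c a).2 (c b).2 := by omega
      _ = ∑ j : Fin n, ((if (c a).1 j ≠ (c m).1 j then 1 else 0)
            + (if (c a).2 j ≠ (c b).2 j then 1 else 0)) := by
          rw [hh1, hh2, Finset.sum_add_distrib]
      _ ≤ ∑ j : Fin n,
            ((if y₁ j - (c a).1 j ≠ 0 ∨ y₂ j - (c a).2 j ≠ 0 then 1 else 0)
            + (if y₁ j - (c b).1 j ≠ 0 ∨ y₂ j - (c b).2 j ≠ 0 then 1 else 0)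
            + (if y₁ j - (c m).1 j ≠ 0 ∨ y₂ j - (c m).2 j ≠ 0 then 1 else 0)) := by
          apply Finset.sum_le_sum
          intro j _
          rw [← h1, ← h2]
          exact col (y₁ j) ((c a).1 j) ((c m).1 j) (y₂ j) ((c a).2 j) ((c b).2 j)
      _ = f a + f b + f m := by
          rw [hfr a, hfr b, hfr m, ← Finset.sum_add_distrib, ← Finset.sum_add_distrib]
  have hsub : f a + f b + f m ≤ ∑ r : Fin 3, f r := by
    have h1 : ∑ r ∈ ({a, b, m} : Finset (Fin 3)), f r = f a + (f b + f m) := by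
      rw [Finset.sum_insert (by simp [hab, ham]), Finset.sum_pair hbm]
    have h2 : ∑ r ∈ ({a, b, m} : Finset (Fin 3)), f r ≤ ∑ r : Fin 3, f r :=
      Finset.sum_le_sum_of_subset (Finset.subset_univ _)
    omega
  have : (2 * d : ℚ) ≤ ((∑ r : Fin 3, f r : ℕ) : ℚ) := by
    have : 2 * d ≤ ∑ r : Fin 3, f r := le_trans key hsub
    exact_mod_cast this
  linarith

/-- Two-level version: given codes `C₁ ⊆ G₁^n`, `C₂ ⊆ G₂^n` of minimum distance at least `d`,
each strongly-`(τ,2)`-list decodable, with `3τ ≤ 2d-1`, for every pair `(y₁,y₂)` there do not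
exist three distinct pairs of codewords whose total column-wise distance to `(y₁,y₂)`
is at most `3τ`. -/
theorem stmt_5 (n d : ℕ) (hd : 0 < d) (τ : ℚ) (hτ : 3 * τ ≤ 2 * (d : ℚ) - 1)
    (G₁ G₂ : Type*) [AddCommGroup G₁] [AddCommGroup G₂] [DecidableEq G₁] [DecidableEq G₂]
    (C₁ : Set (Fin n → G₁)) (C₂ : Set (Fin n → G₂))
    (hmin₁ : ∀ c ∈ C₁, ∀ c' ∈ C₁, c ≠ c' → d ≤ hammingDist c c')
    (hmin₂ : ∀ c ∈ C₂, ∀ c' ∈ C₂, c ≠ c' → d ≤ hammingDist c c')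
    (hstrong₁ : ∀ y : Fin n → G₁, ∀ c₁ ∈ C₁, ∀ c₂ ∈ C₁, ∀ c₃ ∈ C₁,
      c₁ ≠ c₂ → c₁ ≠ c₃ → c₂ ≠ c₃ →
      3 * τ < ((hammingDist y c₁ + hammingDist y c₂ + hammingDist y c₃ : ℕ) : ℚ))
    (hstrong₂ : ∀ y : Fin n → G₂, ∀ c₁ ∈ C₂, ∀ c₂ ∈ C₂, ∀ c₃ ∈ C₂,
      c₁ ≠ c₂ → c₁ ≠ c₃ → c₂ ≠ c₃ →
      3 * τ < ((hammingDist y c₁ + hammingDist y c₂ + hammingDist y c₃ : ℕ) : ℚ))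
    (y₁ : Fin n → G₁) (y₂ : Fin n → G₂) :
    ¬ ∃ c : Fin 3 → (Fin n → G₁) × (Fin n → G₂),
        (∀ r, (c r).1 ∈ C₁ ∧ (c r).2 ∈ C₂) ∧ Function.Injective c ∧
        (∑ r : Fin 3,
          ((Finset.univ.filter (fun j : Fin n => y₁ j - (c r).1 j ≠ 0)) ∪
           (Finset.univ.filter (fun j : Fin n => y₂ j - (c r).2 j ≠ 0))).card : ℚ)
          ≤ 3 * τ := by
  rintro ⟨c, hC, hinj, hsum⟩
  set f : Fin 3 → ℕ := fun r =>
    ((Finset.univ.filter (fun j : Fin n => y₁ j - (c r).1 j ≠ 0)) ∪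
     (Finset.univ.filter (fun j : Fin n => y₂ j - (c r).2 j ≠ 0))).card with hf
  have hsum' : ((∑ r : Fin 3, f r : ℕ) : ℚ) ≤ 3 * τ := by push_cast; exact hsum
  -- each component hamming distance is at most the column distance
  have hd1 : ∀ r, hammingDist y₁ (c r).1 ≤ f r := by
    intro r
    have he : (Finset.univ.filter fun j : Fin n => y₁ j ≠ (c r).1 j)
        = (Finset.univ.filter fun j : Fin n => y₁ j - (c r).1 j ≠ 0) := by
      apply Finset.filter_congr
      intro j _
      simp [sub_ne_zero]
    have hfr0 : f r = ((Finset.univ.filter (fun j : Fin n => y₁ j - (c r).1 j ≠ 0)) ∪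
        (Finset.univ.filter (fun j : Fin n => y₂ j - (c r).2 j ≠ 0))).card := rfl
    rw [hfr0, hammingDist, he]
    exact Finset.card_le_card Finset.subset_union_left
  have hd2 : ∀ r, hammingDist y₂ (c r).2 ≤ f r := by
    intro r
    have he : (Finset.univ.filter fun j : Fin n => y₂ j ≠ (c r).2 j)
        = (Finset.univ.filter fun j : Fin n => y₂ j - (c r).2 j ≠ 0) := by
      apply Finset.filter_congr
      intro j _
      simp [sub_ne_zero]
    have hfr0 : f r = ((Finset.univ.filter (fun j : Fin n => y₁ j - (c r).1 j ≠ 0)) ∪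
        (Finset.univ.filter (fun j : Fin n => y₂ j - (c r).2 j ≠ 0))).card := rfl
    rw [hfr0, hammingDist, he]
    exact Finset.card_le_card Finset.subset_union_right
  have hfin : ∑ r : Fin 3, f r = f 0 + f 1 + f 2 := by
    rw [Fin.sum_univ_three]
  by_cases hfst : (c 0).1 = (c 1).1 ∨ (c 0).1 = (c 2).1 ∨ (c 1).1 = (c 2).1
  · by_cases hsnd : (c 0).2 = (c 1).2 ∨ (c 0).2 = (c 2).2 ∨ (c 1).2 = (c 2).2
    · -- mixed case
      have hne : ∀ i j : Fin 3, i ≠ j → c i ≠ c j := fun i j hij h => hij (hinj h)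
      have hpair : ∀ i j : Fin 3, i ≠ j → (c i).1 = (c j).1 → (c i).2 ≠ (c j).2 := by
        intro i j hij he1 he2
        exact hne i j hij (Prod.ext he1 he2)
      have hpair' : ∀ i j : Fin 3, i ≠ j → (c i).2 = (c j).2 → (c i).1 ≠ (c j).1 := by
        intro i j hij he2 he1
        exact hne i j hij (Prod.ext he1 he2)
      have hm1 : ∀ i j : Fin 3, (c i).1 ≠ (c j).1 → d ≤ hammingDist (c i).1 (c j).1 :=
        fun i j h => hmin₁ _ (hC i).1 _ (hC j).1 h
      have hm2 : ∀ i j : Fin 3, (c i).2 ≠ (c j).2 → d ≤ hammingDist (c i).2 (c j).2 :=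
        fun i j h => hmin₂ _ (hC i).2 _ (hC j).2 h
      rcases hfst with h|h|h <;> rcases hsnd with h'|h'|h'
      · exact hpair 0 1 (by decide) h h'
      · exact mixed hτ hsum' 0 1 2 (by decide) (by decide) (by decide) h h'
          (hm1 0 2 (hpair' 0 2 (by decide) h')) (hm2 0 1 (hpair 0 1 (by decide) h))
      · exact mixed hτ hsum' 1 0 2 (by decide) (by decide) (by decide) h.symm h'
          (hm1 1 2 (hpair' 1 2 (by decide) h')) (hm2 1 0 (hpair 1 0 (by decide) h.symm))
      · exact mixed hτ hsum' 0 2 1 (by decide) (by decide) (by decide) h h'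
          (hm1 0 1 (hpair' 0 1 (by decide) h')) (hm2 0 2 (hpair 0 2 (by decide) h))
      · exact hpair 0 2 (by decide) h h'
      · exact mixed hτ hsum' 2 0 1 (by decide) (by decide) (by decide) h.symm h'.symm
          (hm1 2 1 (hpair' 2 1 (by decide) h'.symm)) (hm2 2 0 (hpair 2 0 (by decide) h.symm))
      · exact mixed hτ hsum' 1 2 0 (by decide) (by decide) (by decide) h h'.symm
          (hm1 1 0 (hpair' 1 0 (by decide) h'.symm)) (hm2 1 2 (hpair 1 2 (by decide) h))
      · exact mixed hτ hsum' 2 1 0 (by decide) (by decide) (by decide) h.symm h'.symm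
          (hm1 2 0 (hpair' 2 0 (by decide) h'.symm)) (hm2 2 1 (hpair 2 1 (by decide) h.symm))
      · exact hpair 1 2 (by decide) h h'
    · -- seconds pairwise distinct: use hstrong₂
      push_neg at hsnd
      obtain ⟨h01, h02, h12⟩ := hsnd
      have hs := hstrong₂ y₂ _ (hC 0).2 _ (hC 1).2 _ (hC 2).2 h01 h02 h12
      have hle : hammingDist y₂ (c 0).2 + hammingDist y₂ (c 1).2 + hammingDist y₂ (c 2).2
          ≤ ∑ r : Fin 3, f r := by
        rw [hfin]
        have := hd2 0; have := hd2 1; have := hd2 2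
        omega
      have : ((hammingDist y₂ (c 0).2 + hammingDist y₂ (c 1).2 + hammingDist y₂ (c 2).2 : ℕ) : ℚ)
          ≤ ((∑ r : Fin 3, f r : ℕ) : ℚ) := by exact_mod_cast hle
      linarith
  · -- firsts pairwise distinct: use hstrong₁
    push_neg at hfst
    obtain ⟨h01, h02, h12⟩ := hfst
    have hs := hstrong₁ y₁ _ (hC 0).1 _ (hC 1).1 _ (hC 2).1 h01 h02 h12
    have hle : hammingDist y₁ (c 0).1 + hammingDist y₁ (c 1).1 + hammingDist y₁ (c 2).1
        ≤ ∑ r : Fin 3, f r := by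
      rw [hfin]
      have := hd1 0; have := hd1 1; have := hd1 2
      omega
    have : ((hammingDist y₁ (c 0).1 + hammingDist y₁ (c 1).1 + hammingDist y₁ (c 2).1 : ℕ) : ℚ)
        ≤ ((∑ r : Fin 3, f r : ℕ) : ℚ) := by exact_mod_cast hle
    linarith
end

section
/- Let V be a k-dimensional vector space over F_q and let W ⊆ V be a linear subspace such that any two vectors of W differ in at most D·k coordinates (with respect to a fixed basis), where 0 ≤ D < 1 and Dk is an integer. Then dim W ≤ Dk, i.e., |W| ≤ q^{kD}. -/
open Module Submodule

/-- A linear `(k, Dk)`-anticode over `F_q` (a subspace of `F_q^k` in which any two vectors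
differ in at most `Dk` coordinates) has dimension at most `Dk`, hence size at most `q^(Dk)`. -/
theorem stmt_9 (F : Type*) [Field F] [Fintype F] [DecidableEq F] (k : ℕ)
    (D : ℝ) (hD0 : 0 ≤ D) (hD1 : D < 1) (m : ℕ) (hm : (m : ℝ) = D * k)
    (W : Submodule F (Fin k → F))
    (hanti : ∀ x ∈ W, ∀ y ∈ W, hammingDist x y ≤ m) :
    Module.finrank F W ≤ m ∧ Nat.card W ≤ Fintype.card F ^ m := by
  classical
  haveI : FiniteDimensional F W := by infer_instance
  set d := Module.finrank F W with hd
  -- the coordinate functionals on W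
  set e : Fin k → Module.Dual F W := fun i => (LinearMap.proj i).comp W.subtype with he
  -- they span the dual of W
  have hspan : span F (Set.range e) = ⊤ := by
    have hco : (span F (Set.range e)).dualCoannihilator = ⊥ := by
      rw [eq_bot_iff]
      intro w hw
      rw [Submodule.mem_dualCoannihilator] at hw
      have hw' : ∀ i, e i w = 0 := fun i => hw _ (subset_span (Set.mem_range_self i))
      have : (w : Fin k → F) = 0 := funext fun i => hw' i
      simpa [Submodule.mem_bot] using Subtype.ext this
    have := Subspace.finrank_add_finrank_dualCoannihilator_eq (span F (Set.range e))
    rw [hco, finrank_bot, add_zero] at this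
    exact Submodule.eq_top_of_finrank_eq (by rw [this, Subspace.dual_finrank_eq])
  obtain ⟨t, hts, htspan, htli⟩ := exists_linearIndependent F (Set.range e)
  rw [hspan] at htspan
  have htfin : t.Finite := htli.setFinite
  haveI : Fintype t := htfin.fintype
  have hcard : Fintype.card t = d := by
    have := finrank_span_set_eq_card htli
    rw [htspan, finrank_top, Subspace.dual_finrank_eq, Set.toFinset_card] at this
    exact this.symm
  -- the evaluation map on the functionals in t is bijective
  set ψ : W →ₗ[F] (t → F) := LinearMap.pi (fun φ => (φ : Module.Dual F W)) with hψ
  have hinj : Function.Injective ψ := by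
    rw [← LinearMap.ker_eq_bot, eq_bot_iff]
    intro w hw
    rw [LinearMap.mem_ker] at hw
    have h0 : ∀ φ : Module.Dual F W, φ w = 0 := by
      intro φ
      have hφ : φ ∈ span F t := htspan ▸ Submodule.mem_top
      refine Submodule.span_induction (fun ψ' hψ' => ?_) (by simp) ?_ ?_ hφ
      · exact congrFun hw ⟨ψ', hψ'⟩
      · intro a b _ _ ha hb; simp [ha, hb]
      · intro c a _ ha; simp [ha]
    rw [Submodule.mem_bot]
    exact (Module.forall_dual_apply_eq_zero_iff F w).mp h0
  have hsurj : Function.Surjective ψ := by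
    refine (LinearMap.injective_iff_surjective_of_finrank_eq_finrank ?_).mp hinj
    rw [Module.finrank_pi, hcard]
  -- a vector of W that evaluates to 1 on all functionals of t
  obtain ⟨c, hc⟩ := hsurj (fun _ => 1)
  -- its Hamming weight is at least d
  have hdle : d ≤ hammingNorm (c : Fin k → F) := by
    -- choose, for each φ ∈ t, a coordinate index realizing it
    have hchoice : ∀ φ : t, ∃ i : Fin k, e i = (φ : Module.Dual F W) := fun φ => hts φ.2
    choose idx hidx using hchoice
    have hne : ∀ φ : t, (c : Fin k → F) (idx φ) ≠ 0 := by
      intro φ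
      have : e (idx φ) c = 1 := by rw [hidx]; exact congrFun hc φ
      simp only [he, LinearMap.comp_apply, LinearMap.proj_apply, Submodule.subtype_apply] at this
      rw [this]; exact one_ne_zero
    have hinj' : Function.Injective idx := by
      intro φ φ' h
      have := (hidx φ).symm.trans (h ▸ hidx φ')
      exact Subtype.ext this
    calc d = Fintype.card t := hcard.symm
      _ = (Finset.univ.image idx).card := (Finset.card_image_of_injective _ hinj').symm
      _ ≤ hammingNorm (c : Fin k → F) := by
          apply Finset.card_le_card
          intro i hi
          simp only [Finset.mem_image] at hi
          obtain ⟨φ, _, rfl⟩ := hi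
          simpa [hammingNorm] using hne φ
  have hnorm : hammingNorm (c : Fin k → F) ≤ m := by
    have := hanti c c.2 0 W.zero_mem
    rwa [hammingDist_zero_right] at this
  have hdm : d ≤ m := le_trans hdle hnorm
  refine ⟨hdm, ?_⟩
  have hW : Nat.card W = Fintype.card F ^ d := by
    rw [Nat.card_eq_fintype_card, card_eq_pow_finrank (K := F) (V := W)]
  rw [hW]
  exact Nat.pow_le_pow_right Fintype.card_pos hdm
end

section
/- Fix L ≥ 2 and define f(x) = Lx - (L-1)/(L+1) - (1/(L+1))·(L-1)/(L - (L+1)x) for 0 < x ≤ 1/(L+1). Then f is increasing on this interval and f(x) ≤ f(1/(L+1)) = 0; consequently, for 0 < θ ≤ 1/(L+1), L·θ ≤ ((1-θ)/θ)·(1 - (1-2θ)/(1 - (1 + 1/L)θ)). -/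
/-!
With `d(x) = L - (L+1)x ≥ L - 1 ≥ 1` on `x ≤ 1/(L+1)`, the difference quotient of `f` is
`L - (L-1)/(d(x) d(y)) > 0`, so `f` increases up to `1/(L+1)`, where it vanishes. Since `f(θ)` is
exactly `Lθ` minus the right-hand side of the final inequality, that inequality is `f(θ) ≤ 0`.
-/

open Set

/-- The distortion `Lθ` of L-MDS codes minus the distortion of MDS time-sharing at the same rate
(see `distortionGap_eq_sub`). -/
noncomputable def distortionGap (L x : ℝ) : ℝ :=
  L * x - (L - 1) / (L + 1) - (1 / (L + 1)) * ((L - 1) / (L - (L + 1) * x))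

section distortionGap

variable {L : ℝ}

lemma sub_one_le_sub_mul_of_le_inv (hL : 0 < L + 1) {x : ℝ} (hx : x ≤ 1 / (L + 1)) :
    L - 1 ≤ L - (L + 1) * x := by
  have : (L + 1) * x ≤ 1 := by rwa [le_div_iff₀' hL] at hx
  linarith

lemma distortionGap_sub_distortionGap (hL : L + 1 ≠ 0) {x y : ℝ}
    (hx : L - (L + 1) * x ≠ 0) (hy : L - (L + 1) * y ≠ 0) :
    distortionGap L y - distortionGap L x =
      (y - x) * (L - (L - 1) / ((L - (L + 1) * x) * (L - (L + 1) * y))) := by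
  have hx' : L - x * (L + 1) ≠ 0 := by rwa [mul_comm]
  have hy' : L - y * (L + 1) ≠ 0 := by rwa [mul_comm]
  unfold distortionGap
  field_simp
  ring

theorem distortionGap_strictMonoOn (hL : 2 ≤ L) :
    StrictMonoOn (distortionGap L) (Iic (1 / (L + 1))) := by
  intro x hx y hy hxy
  have hdy : 1 ≤ L - (L + 1) * y := by
    linarith [sub_one_le_sub_mul_of_le_inv (by linarith) (mem_Iic.mp hy)]
  have hdxy : L - (L + 1) * y < L - (L + 1) * x := by nlinarith
  have hprod : 1 < (L - (L + 1) * x) * (L - (L + 1) * y) := by nlinarith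
  have hfactor : L - 1 < L * ((L - (L + 1) * x) * (L - (L + 1) * y)) := by nlinarith
  rw [← sub_pos, distortionGap_sub_distortionGap (by linarith) (by linarith) (by linarith)]
  refine mul_pos (sub_pos.mpr hxy) (sub_pos.mpr ?_)
  rwa [div_lt_iff₀ (by linarith)]

lemma distortionGap_one_div_add_one (hL : L ≠ 1) (hL' : L + 1 ≠ 0) :
    distortionGap L (1 / (L + 1)) = 0 := by
  have hL1 : L - 1 ≠ 0 := sub_ne_zero.mpr hL
  have hd : L - (L + 1) * (1 / (L + 1)) = L - 1 := by field_simp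
  rw [distortionGap, hd]
  field_simp
  ring

/-- Behind the identity: `1 - (1 + 1/L)θ = (L - (L+1)θ) / L` and `(L - (L+1)θ) + 1 = (L+1)(1-θ)`. -/
lemma distortionGap_eq_sub (hL : L ≠ 0) (hL' : L + 1 ≠ 0) {θ : ℝ} (hθ : θ ≠ 0)
    (hd : L - (L + 1) * θ ≠ 0) :
    distortionGap L θ =
      L * θ - ((1 - θ) / θ) * (1 - (1 - 2 * θ) / (1 - (1 + 1 / L) * θ)) := by
  have hrate : 1 - (1 + 1 / L) * θ = (L - (L + 1) * θ) / L := by field_simp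
  have hd' : L - θ * (L + 1) ≠ 0 := by rwa [mul_comm]
  rw [distortionGap, hrate]
  field_simp
  ring

end distortionGap

/-- For `L ≥ 2`, the function `f(x) = Lx - (L-1)/(L+1) - (1/(L+1))·(L-1)/(L-(L+1)x)` is
increasing on `(0, 1/(L+1)]`, satisfies `f(x) ≤ f(1/(L+1)) = 0` there, and consequently
`Lθ ≤ ((1-θ)/θ)(1 - (1-2θ)/(1 - (1+1/L)θ))` for `0 < θ ≤ 1/(L+1)`. -/
theorem stmt_14 (L : ℕ) (hL : 2 ≤ L) (f : ℝ → ℝ)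
    (hf : ∀ x : ℝ, f x = (L : ℝ) * x - ((L : ℝ) - 1) / ((L : ℝ) + 1) -
      (1 / ((L : ℝ) + 1)) * (((L : ℝ) - 1) / ((L : ℝ) - ((L : ℝ) + 1) * x))) :
    (∀ x y : ℝ, 0 < x → x < y → y ≤ 1 / ((L : ℝ) + 1) → f x < f y) ∧
    (∀ x : ℝ, 0 < x → x ≤ 1 / ((L : ℝ) + 1) → f x ≤ f (1 / ((L : ℝ) + 1))) ∧
    f (1 / ((L : ℝ) + 1)) = 0 ∧
    (∀ θ : ℝ, 0 < θ → θ ≤ 1 / ((L : ℝ) + 1) →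
      (L : ℝ) * θ ≤ ((1 - θ) / θ) * (1 - (1 - 2 * θ) / (1 - (1 + 1 / (L : ℝ)) * θ))) := by
  obtain rfl : f = distortionGap L := funext hf
  have hL2 : (2 : ℝ) ≤ L := by exact_mod_cast hL
  have hmono := distortionGap_strictMonoOn hL2
  have hend := distortionGap_one_div_add_one (L := L) (by linarith) (by linarith)
  have hle : ∀ x ≤ 1 / ((L : ℝ) + 1), distortionGap L x ≤ distortionGap L (1 / (L + 1)) :=
    fun x hx => hmono.monotoneOn hx (mem_Iic.mpr le_rfl) hx
  refine ⟨fun x y _ hxy hy => hmono (hxy.le.trans hy) hy hxy, fun x _ hx => hle x hx, hend, ?_⟩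
  intro θ hθ hθle
  have hd := sub_one_le_sub_mul_of_le_inv (L := L) (by linarith) hθle
  rw [← sub_nonpos, ← distortionGap_eq_sub (by linarith) (by linarith) hθ.ne' (by linarith), ← hend]
  exact hle θ hθle
end

section
/- In the setting of Construction 2 with parameters T ≥ s ≥ 1, suppose at most T of the 2T+1 packets are corrupted, and let i_1, i_2 ∈ [2T+1] satisfy i_2 - i_1 ∈ {s,...,2T+1-s} mod 2T+1. With A_ℓ the multiset of 2T+1-s candidates of x_{i_ℓ}, ξ_ℓ its most frequent element, and B_ℓ the sub-multiset of s candidates of x_{i_ℓ} coming from the s packets not containing x_{i_{3-ℓ}}: if F_{B_ℓ}(ξ_ℓ) ≤ T - F_{A_{3-ℓ}}(ξ_{3-ℓ}), then ξ_ℓ ≠ x_{i_ℓ}. -/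
/-- Frequency of the value `v` among the candidates of `x_i`, i.e. over the packets `j`
whose content includes coordinate `i` (those with `(i - j).val ≥ s`). -/
def candFreqA {A : Type*} [DecidableEq A] (T s : ℕ)
    (xr : ZMod (2 * T + 1) → ZMod (2 * T + 1) → A) (i : ZMod (2 * T + 1)) (v : A) : ℕ :=
  (Finset.univ.filter (fun j : ZMod (2 * T + 1) => s ≤ (i - j).val ∧ xr i j = v)).card

/-- Frequency of the value `v` among the candidates of `x_i` coming from the `s` packets
that do not contain coordinate `i'` (those `j ∈ S_{i'-s+1}`, i.e. `(i' - j).val < s`). -/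
def candFreqB {A : Type*} [DecidableEq A] (T s : ℕ)
    (xr : ZMod (2 * T + 1) → ZMod (2 * T + 1) → A) (i i' : ZMod (2 * T + 1)) (v : A) : ℕ :=
  (Finset.univ.filter (fun j : ZMod (2 * T + 1) => (i' - j).val < s ∧ xr i j = v)).card

/-- Lemma 4(1): in Construction 2 with at most `T` corrupted packets, if
`F_{B₁}(ξ₁) ≤ T - F_{A₂}(ξ₂)` then `ξ₁` is incorrect. -/
theorem stmt_17 (T s : ℕ) (hs : 1 ≤ s) (hsT : s ≤ T) (A : Type*) [DecidableEq A]
    (x : ZMod (2 * T + 1) → A)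
    (xr : ZMod (2 * T + 1) → ZMod (2 * T + 1) → A)
    (E : Finset (ZMod (2 * T + 1))) (hE : E.card ≤ T)
    (hgood : ∀ i j, s ≤ (i - j).val → j ∉ E → xr i j = x i)
    (i₁ i₂ : ZMod (2 * T + 1))
    (hsep : (i₂ - i₁).val ∈ Finset.Icc s (2 * T + 1 - s))
    (ξ₁ ξ₂ : A)
    (hξ₁ : ∀ v : A, candFreqA T s xr i₁ v ≤ candFreqA T s xr i₁ ξ₁)
    (hξ₂ : ∀ v : A, candFreqA T s xr i₂ v ≤ candFreqA T s xr i₂ ξ₂)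
    (hyp : (candFreqB T s xr i₁ i₂ ξ₁ : ℤ) ≤ (T : ℤ) - candFreqA T s xr i₂ ξ₂) :
    ξ₁ ≠ x i₁ := by
  intro hcon
  subst hcon
  have hn : (2 * T + 1) ≠ 0 := by omega
  haveI : NeZero (2 * T + 1) := ⟨hn⟩
  simp only [Finset.mem_Icc] at hsep
  have hvlt : (i₂ - i₁).val < 2 * T + 1 := ZMod.val_lt _
  have key : ∀ j : ZMod (2 * T + 1), (i₂ - j).val < s → s ≤ (i₁ - j).val := by
    intro j hj
    have hne : i₂ - i₁ ≠ 0 := by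
      intro h
      rw [h, ZMod.val_zero] at hsep
      omega
    have h12 : (i₁ - i₂).val = 2 * T + 1 - (i₂ - i₁).val := by
      have he : i₁ - i₂ = -(i₂ - i₁) := by ring
      rw [he, ZMod.neg_val, if_neg hne]
    have heq : i₁ - j = (i₁ - i₂) + (i₂ - j) := by ring
    rw [heq, ZMod.val_add, Nat.mod_eq_of_lt (by omega)]
    omega
  set S1 := Finset.univ.filter (fun j : ZMod (2 * T + 1) => (i₂ - j).val < s ∧ j ∉ E) with hS1
  set S2 := Finset.univ.filter (fun j : ZMod (2 * T + 1) => s ≤ (i₂ - j).val ∧ j ∉ E) with hS2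
  have hc1 : S1.card ≤ candFreqB T s xr i₁ i₂ (x i₁) := by
    apply Finset.card_le_card
    intro j hj
    simp only [hS1, Finset.mem_filter, Finset.mem_univ, true_and] at hj
    simp only [candFreqB, Finset.mem_filter, Finset.mem_univ, true_and]
    exact ⟨hj.1, hgood i₁ j (key j hj.1) hj.2⟩
  have hc2 : S2.card ≤ candFreqA T s xr i₂ (x i₂) := by
    apply Finset.card_le_card
    intro j hj
    simp only [hS2, Finset.mem_filter, Finset.mem_univ, true_and] at hj
    simp only [candFreqA, Finset.mem_filter, Finset.mem_univ, true_and]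
    exact ⟨hj.1, hgood i₂ j hj.1 hj.2⟩
  have hdisj : Disjoint S1 S2 := by
    rw [Finset.disjoint_left]
    intro j h1 h2
    simp only [hS1, Finset.mem_filter, Finset.mem_univ, true_and] at h1
    simp only [hS2, Finset.mem_filter, Finset.mem_univ, true_and] at h2
    omega
  have hunion : Eᶜ ⊆ S1 ∪ S2 := by
    intro j hj
    rw [Finset.mem_compl] at hj
    rw [Finset.mem_union]
    by_cases h : (i₂ - j).val < s
    · left
      simp only [hS1, Finset.mem_filter, Finset.mem_univ, true_and]
      exact ⟨h, hj⟩
    · right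
      simp only [hS2, Finset.mem_filter, Finset.mem_univ, true_and]
      exact ⟨by omega, hj⟩
  have hcompl : (2 * T + 1) - E.card ≤ S1.card + S2.card := by
    have h1 : Eᶜ.card ≤ (S1 ∪ S2).card := Finset.card_le_card hunion
    have h2 : (S1 ∪ S2).card ≤ S1.card + S2.card := Finset.card_union_le _ _
    have h3 : Eᶜ.card = Fintype.card (ZMod (2 * T + 1)) - E.card := Finset.card_compl E
    rw [ZMod.card] at h3
    omega
  have hA2 : candFreqA T s xr i₂ (x i₂) ≤ candFreqA T s xr i₂ ξ₂ := hξ₂ (x i₂)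
  have : T + 1 ≤ candFreqB T s xr i₁ i₂ (x i₁) + candFreqA T s xr i₂ ξ₂ := by omega
  omega
end

section
/- In the setting of Construction 2 (s ≤ T, at most T corrupted packets, indices i_1, i_2 with i_2 - i_1 ∈ {s,...,2T+1-s} mod 2T+1, multisets A_ℓ, B_ℓ and most frequent candidates ξ_ℓ as above): if F_{B_1}(ξ_1) > T - F_{A_2}(ξ_2) and F_{B_1}(ξ_1) ≥ s + F_{A_2}(ξ_2) - T, then ξ_1 = x_{i_1}. -/
/-!
If `ξ₁ ≠ x_{i₁}`, then among the `s` packets omitting `i₂`, all of which contain `i₁`, the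
uncorrupted ones disagree with `ξ₁`, so at most `s - F_{B₁}(ξ₁)` of them are uncorrupted. Every
other uncorrupted packet contains `i₂` and votes for `x_{i₂}`, so there are at most
`F_{A₂}(x_{i₂}) ≤ F_{A₂}(ξ₂)` of them. That leaves at most `s - F_{B₁}(ξ₁) + F_{A₂}(ξ₂) ≤ T`
uncorrupted packets, whereas at least `T + 1` of the `2T + 1` packets are uncorrupted.
-/

namespace ZMod

/-- With `(b - j).val < s` meaning "packet `j` omits coordinate `b`": a packet omitting `b`
contains every `a` at cyclic distance at least `s` from `b`. -/
theorem le_val_sub_of_val_sub_lt {n s : ℕ} [NeZero n] {a b j : ZMod n}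
    (hsep : (b - a).val ∈ Finset.Icc s (n - s)) (hj : (b - j).val < s) :
    s ≤ (a - j).val := by
  obtain ⟨hs_le, hle_sub⟩ := Finset.mem_Icc.mp hsep
  have hba : b - a ≠ 0 := by
    intro h
    rw [h, val_zero] at hs_le
    omega
  have hab : (a - b).val = n - (b - a).val := by
    rw [← neg_sub, neg_val, if_neg hba]
  have hbj : (b - j).val < n := val_lt _
  rw [show a - j = (b - j) + (a - b) by ring, val_add, hab, Nat.mod_eq_of_lt (by omega)]
  omega

theorem card_filter_val_sub_lt_le {n : ℕ} [NeZero n] (s : ℕ) (b : ZMod n) :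
    (Finset.univ.filter fun j : ZMod n => (b - j).val < s).card ≤ s := by
  simpa using Finset.card_le_card_of_injOn (fun j : ZMod n => (b - j).val)
    (t := Finset.range s) (fun j hj => by simpa using hj)
    (fun j _ k _ h => sub_right_inj.mp (val_injective n h))

end ZMod

theorem card_compl_add_candFreqB_le {A : Type*} [DecidableEq A] {T s : ℕ}
    {x : ZMod (2 * T + 1) → A} {xr : ZMod (2 * T + 1) → ZMod (2 * T + 1) → A}
    {E : Finset (ZMod (2 * T + 1))}
    (hgood : ∀ i j, s ≤ (i - j).val → j ∉ E → xr i j = x i) {i i' : ZMod (2 * T + 1)}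
    (hcov : ∀ j, (i' - j).val < s → s ≤ (i - j).val) {ξ : A} (hξ : ξ ≠ x i) :
    Eᶜ.card + candFreqB T s xr i i' ξ ≤ s + candFreqA T s xr i' (x i') := by
  set omits := Finset.univ.filter fun j : ZMod (2 * T + 1) => (i' - j).val < s
  have h_omits : (Eᶜ.filter fun j => (i' - j).val < s).card ≤
      (omits.filter fun j => ¬xr i j = ξ).card :=
    Finset.card_le_card fun j hj => by
      simp only [Finset.mem_filter, Finset.mem_compl, Finset.mem_univ, true_and,
        omits] at hj ⊢
      exact ⟨hj.2, fun h => hξ (h.symm.trans (hgood i j (hcov j hj.2) hj.1))⟩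
  have h_freqB : candFreqB T s xr i i' ξ = (omits.filter (xr i · = ξ)).card := by
    rw [candFreqB, Finset.filter_filter]
  have h_contains : (Eᶜ.filter fun j => ¬(i' - j).val < s).card ≤
      candFreqA T s xr i' (x i') :=
    Finset.card_le_card fun j hj => by
      simp only [Finset.mem_filter, Finset.mem_compl, Finset.mem_univ, true_and,
        not_lt] at hj ⊢
      exact ⟨hj.2, hgood i' j hj.2 hj.1⟩
  have h_split_omits := Finset.card_filter_add_card_filter_not (s := omits) (xr i · = ξ)
  have h_split_good :=
    Finset.card_filter_add_card_filter_not (s := Eᶜ) fun j => (i' - j).val < s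
  have h_omits_card : omits.card ≤ s := ZMod.card_filter_val_sub_lt_le s i'
  omega

theorem stmt_18_general (T s : ℕ) (A : Type*) [DecidableEq A]
    (x : ZMod (2 * T + 1) → A)
    (xr : ZMod (2 * T + 1) → ZMod (2 * T + 1) → A)
    (E : Finset (ZMod (2 * T + 1))) (hE : E.card ≤ T)
    (hgood : ∀ i j, s ≤ (i - j).val → j ∉ E → xr i j = x i)
    (i₁ i₂ : ZMod (2 * T + 1))
    (hsep : (i₂ - i₁).val ∈ Finset.Icc s (2 * T + 1 - s))
    (ξ₁ ξ₂ : A)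
    (hξ₂ : ∀ v : A, candFreqA T s xr i₂ v ≤ candFreqA T s xr i₂ ξ₂)
    (hZ : (s : ℤ) + candFreqA T s xr i₂ ξ₂ - T ≤ (candFreqB T s xr i₁ i₂ ξ₁ : ℤ)) :
    ξ₁ = x i₁ := by
  by_contra hξ₁
  have h_count := card_compl_add_candFreqB_le hgood
    (fun j hj => ZMod.le_val_sub_of_val_sub_lt hsep hj) hξ₁
  have h_uncorrupted : Eᶜ.card = 2 * T + 1 - E.card := by
    rw [Finset.card_compl, ZMod.card]
  have h_vote := hξ₂ (x i₂)
  omega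

/-- Lemma 4(3): in Construction 2 with at most `T` corrupted packets, if
`F_{B₁}(ξ₁) > T - F_{A₂}(ξ₂)` and `F_{B₁}(ξ₁) ≥ s + F_{A₂}(ξ₂) - T`, then `ξ₁` is correct. -/
theorem stmt_18 (T s : ℕ) (hs : 1 ≤ s) (hsT : s ≤ T) (A : Type*) [DecidableEq A]
    (x : ZMod (2 * T + 1) → A)
    (xr : ZMod (2 * T + 1) → ZMod (2 * T + 1) → A)
    (E : Finset (ZMod (2 * T + 1))) (hE : E.card ≤ T)
    (hgood : ∀ i j, s ≤ (i - j).val → j ∉ E → xr i j = x i)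
    (i₁ i₂ : ZMod (2 * T + 1))
    (hsep : (i₂ - i₁).val ∈ Finset.Icc s (2 * T + 1 - s))
    (ξ₁ ξ₂ : A)
    (hξ₁ : ∀ v : A, candFreqA T s xr i₁ v ≤ candFreqA T s xr i₁ ξ₁)
    (hξ₂ : ∀ v : A, candFreqA T s xr i₂ v ≤ candFreqA T s xr i₂ ξ₂)
    (hU : (T : ℤ) - candFreqA T s xr i₂ ξ₂ < (candFreqB T s xr i₁ i₂ ξ₁ : ℤ))
    (hZ : (s : ℤ) + candFreqA T s xr i₂ ξ₂ - T ≤ (candFreqB T s xr i₁ i₂ ξ₁ : ℤ)) :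
    ξ₁ = x i₁ :=
  stmt_18_general T s A x xr E hE hgood i₁ i₂ hsep ξ₁ ξ₂ hξ₂ hZ
end

section
/- Let T ≥ 1 and suppose at most T of 2T+1 packets in Example 1's repetition-variant code are corrupted. Then the decoder output y ∈ (Σ ∪ {e})^{2T+1} satisfies: every non-erasure coordinate of y equals the corresponding coordinate of the message x, and y contains at most one erasure; hence the erasure distortion Δ(x,y) ≤ 1/(2T+1). -/
/-- Frequency of the value `v` among the candidates of `x_i` (one candidate from each
packet `j ≠ i`). -/
def freqCand {A : Type*} [DecidableEq A] {T : ℕ}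
    (xr : Fin (2 * T + 1) → Fin (2 * T + 1) → A) (i : Fin (2 * T + 1)) (v : A) : ℕ :=
  (Finset.univ.filter (fun j => j ≠ i ∧ xr i j = v)).card

open Classical in
/-- The decoder of Example 1: if for every index some candidate value has frequency at least
`T+1`, output such a value at every coordinate; otherwise pick an index `i₀` where majority
fails, erase coordinate `i₀` and read all other coordinates from packet `i₀`. -/
noncomputable def decodeRep {A : Type*} [DecidableEq A] {T : ℕ}
    (xr : Fin (2 * T + 1) → Fin (2 * T + 1) → A) (i : Fin (2 * T + 1)) : Option A :=
  if h : ∀ i', ∃ v, T + 1 ≤ freqCand xr i' v then some (Classical.choose (h i))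
  else
    let i₀ := Classical.choose (not_forall.mp h)
    if i = i₀ then none else some (xr i i₀)

/-- Correctness of the Example 1 decoder: with at most `T` of the `2T+1` packets corrupted,
every non-erasure output coordinate equals the corresponding message coordinate, at most one
coordinate is erased, and hence the erasure distortion is at most `1/(2T+1)`. -/
theorem stmt_19 (T : ℕ) (hT : 1 ≤ T) (A : Type*) [DecidableEq A]
    (x : Fin (2 * T + 1) → A)
    (xr : Fin (2 * T + 1) → Fin (2 * T + 1) → A)
    (E : Finset (Fin (2 * T + 1))) (hE : E.card ≤ T)
    (hgood : ∀ i j, j ≠ i → j ∉ E → xr i j = x i) :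
    (∀ i v, decodeRep xr i = some v → v = x i) ∧
    (Finset.univ.filter (fun i => decodeRep xr i = (none : Option A))).card ≤ 1 ∧
    ((Finset.univ.filter (fun i => decodeRep xr i = (none : Option A))).card : ℝ) /
        (2 * (T : ℝ) + 1) ≤ 1 / (2 * (T : ℝ) + 1) := by
  -- any value with frequency ≥ T+1 must be the true message coordinate
  have key : ∀ i v, T + 1 ≤ freqCand xr i v → v = x i := by
    intro i v hv
    by_contra hne
    have hsub : (Finset.univ.filter (fun j => j ≠ i ∧ xr i j = v)) ⊆ E := by
      intro j hj
      simp only [Finset.mem_filter, Finset.mem_univ, true_and] at hj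
      by_contra hjE
      exact hne (hj.2.symm.trans (hgood i j hj.1 hjE))
    have hle := Finset.card_le_card hsub
    unfold freqCand at hv
    omega
  have hcast : ∀ c : ℕ, c ≤ 1 →
      (c : ℝ) / (2 * (T : ℝ) + 1) ≤ 1 / (2 * (T : ℝ) + 1) := by
    intro c hc
    have hpos : (0:ℝ) < 2 * (T : ℝ) + 1 := by positivity
    apply div_le_div_of_nonneg_right ?_ hpos.le |>.trans_eq rfl
    exact_mod_cast hc
  by_cases h : ∀ i', ∃ v, T + 1 ≤ freqCand xr i' v
  · have hdec : ∀ i, decodeRep xr i = some (Classical.choose (h i)) := by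
      intro i; rw [decodeRep, dif_pos h]
    have hempty : Finset.univ.filter (fun i => decodeRep xr i = (none : Option A)) = ∅ := by
      ext i; simp [hdec]
    refine ⟨?_, ?_, ?_⟩
    · intro i v hv
      rw [hdec] at hv
      have hspec := Classical.choose_spec (h i)
      exact key i v ((Option.some_injective A hv) ▸ hspec)
    · rw [hempty]; simp
    · rw [hempty]; simpa using hcast 0 (by norm_num)
  · set i₀ := Classical.choose (not_forall.mp h) with hi₀def
    have hspec : ¬ ∃ v, T + 1 ≤ freqCand xr i₀ v := Classical.choose_spec (not_forall.mp h)
    have hfa : ∀ v, freqCand xr i₀ v ≤ T := by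
      intro v; by_contra hc; exact hspec ⟨v, by omega⟩
    have hEsub : (Finset.univ.filter (fun j => j ≠ i₀ ∧ xr i₀ j ≠ x i₀)) ⊆ E := by
      intro j hj
      simp only [Finset.mem_filter, Finset.mem_univ, true_and] at hj
      by_contra hjE
      exact hj.2 (hgood i₀ j hj.1 hjE)
    have hcard : (Finset.univ.filter (fun j => j ≠ i₀ ∧ xr i₀ j = x i₀)).card
        + (Finset.univ.filter (fun j => j ≠ i₀ ∧ xr i₀ j ≠ x i₀)).card = 2 * T := by
      rw [← Finset.filter_filter, ← Finset.filter_filter,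
        Finset.card_filter_add_card_filter_not]
      rw [Finset.filter_ne', Finset.card_erase_of_mem (Finset.mem_univ _)]
      simp
    have hfi : freqCand xr i₀ (x i₀) ≤ T := hfa (x i₀)
    unfold freqCand at hfi
    have hi₀E : i₀ ∉ E := by
      intro hmem
      have hins : insert i₀ (Finset.univ.filter (fun j => j ≠ i₀ ∧ xr i₀ j ≠ x i₀)) ⊆ E :=
        Finset.insert_subset hmem hEsub
      have hc := Finset.card_le_card hins
      rw [Finset.card_insert_of_notMem (by simp)] at hc
      have := Finset.card_le_card hEsub
      omega
    have hdec : ∀ i, decodeRep xr i = if i = i₀ then none else some (xr i i₀) := by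
      intro i; rw [decodeRep, dif_neg h]
    have hset : Finset.univ.filter (fun i => decodeRep xr i = (none : Option A)) = {i₀} := by
      ext i
      simp only [Finset.mem_filter, Finset.mem_univ, true_and, Finset.mem_singleton, hdec]
      split <;> simp_all
    refine ⟨?_, ?_, ?_⟩
    · intro i v hv
      rw [hdec] at hv
      split at hv
      · exact absurd hv (by simp)
      · rename_i hne
        have := hgood i i₀ (Ne.symm hne) hi₀E
        exact (Option.some_injective A hv) ▸ this
    · rw [hset]; simp
    · rw [hset]; simp only [Finset.card_singleton]; exact hcast 1 le_rfl
end
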